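/- Let q ∈ L¹([0, π]; ℝ) be real-valued and α, β ∈ ℝ, and consider the Dirac system with p ≡ 0, i.e. B y′ + σ₃ q(x) y = λ y. Then a real number λ belongs to Spec(0, q, α, β) if and only if −λ belongs to Spec(0, q, −α, −β); that is, Spec(0, q, −α, −β) = −Spec(0, q, α, β). Moreover, for every eigenvalue λ ∈ Spec(0, q, α, β), the corresponding norming constants agree: ∫₀^π |φ(x, λ, α)|² dx = ∫₀^π |φ(x, −λ, −α)|² dx, where both solutions are taken with the same potential (0, q). -/

import Mathlib

open MeasureTheory Filter Set

noncomputable section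

/-- The matrix `B` with rows `(0, 1)` and `(-1, 0)`. -/
def BmatR : Matrix (Fin 2) (Fin 2) ℝ := !![0, 1; -1, 0]

/-- The potential matrix `Ω(x)` with rows `(p x, q x)` and `(q x, -p x)`. -/
def OmegaR (p q : ℝ → ℝ) (x : ℝ) : Matrix (Fin 2) (Fin 2) ℝ := !![p x, q x; q x, -p x]

/-- `y` is an absolutely continuous solution of `B y' + Ω y = λ y` on `[0, π]`
(the equation holding almost everywhere). -/
def IsSol (p q : ℝ → ℝ) (lam : ℝ) (y : ℝ → Fin 2 → ℝ) : Prop :=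
  ∃ y' : ℝ → Fin 2 → ℝ,
    IntegrableOn y' (Icc 0 Real.pi) ∧
    (∀ x ∈ Icc (0:ℝ) Real.pi, y x = y 0 + ∫ s in (0:ℝ)..x, y' s) ∧
    ∀ᵐ x ∂(volume.restrict (Ioc 0 Real.pi)),
      BmatR.mulVec (y' x) + (OmegaR p q x).mulVec (y x) = lam • y x

/-- `lam` is an eigenvalue of the boundary value problem `L(p, q, α, β)`. -/
def IsEigen (p q : ℝ → ℝ) (α β lam : ℝ) : Prop :=
  ∃ y : ℝ → Fin 2 → ℝ, IsSol p q lam y ∧ (∃ x ∈ Icc (0:ℝ) Real.pi, y x ≠ 0) ∧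
    y 0 0 * Real.cos α + y 0 1 * Real.sin α = 0 ∧
    y Real.pi 0 * Real.cos β + y Real.pi 1 * Real.sin β = 0

/-- The spectrum of the boundary value problem `L(p, q, α, β)`. -/
def Spec (p q : ℝ → ℝ) (α β : ℝ) : Set ℝ := {lam | IsEigen p q α β lam}

/-- `y` is the solution `φ(·, λ, γ)` of the Cauchy problem with initial data
`(sin γ, -cos γ)`. -/
def IsSolInit (p q : ℝ → ℝ) (lam γ : ℝ) (y : ℝ → Fin 2 → ℝ) : Prop :=
  IsSol p q lam y ∧ y 0 = ![Real.sin γ, -Real.cos γ]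

namespace Stmt18

set_option maxHeartbeats 1000000

lemma proj_integral {F : ℝ → Fin 2 → ℝ} {μ : Measure ℝ} (hF : Integrable F μ) (i : Fin 2) :
    (∫ s, F s ∂μ) i = ∫ s, F s i ∂μ := by
  have := (ContinuousLinearMap.proj (R := ℝ) (φ := fun _ : Fin 2 => ℝ) i).integral_comp_comm hF
  simpa using this.symm

/-- Fubini swap for triangle regions. -/
lemma fubini_swap {x : ℝ} {f g : ℝ → ℝ}
    (hf : IntegrableOn f (Ioc 0 x)) (hg : IntegrableOn g (Ioc 0 x)) :
    ∫ s in Ioc 0 x, f s * (∫ t in Ioc s x, g t) =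
      ∫ t in Ioc 0 x, (∫ s in Ioc 0 t, f s) * g t := by
  set μ := volume.restrict (Ioc (0:ℝ) x) with hμ
  set H : ℝ → ℝ → ℝ := fun s t => if s < t then f s * g t else 0 with hH
  have hHint : Integrable (Function.uncurry H) (μ.prod μ) := by
    have he : Function.uncurry H = {p : ℝ × ℝ | p.1 < p.2}.indicator
        (fun p => f p.1 * g p.2) := by
      ext p
      by_cases h : p.1 < p.2 <;> simp [Function.uncurry, hH, h, Set.indicator_apply]
    rw [he]
    exact (Integrable.mul_prod hf hg).indicator (measurableSet_lt measurable_fst measurable_snd)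
  have swap := MeasureTheory.integral_integral_swap hHint
  have L : (∫ s, ∫ t, H s t ∂μ ∂μ) = ∫ s in Ioc 0 x, f s * (∫ t in Ioc s x, g t) := by
    apply setIntegral_congr_fun measurableSet_Ioc
    intro s hs
    have h1 : ∀ t, H s t = (Ioi s).indicator (fun t => f s * g t) t := by
      intro t; by_cases h : s < t <;> simp [hH, h, Set.indicator_apply]
    have hset : Ioc 0 x ∩ Ioi s = Ioc s x := by
      ext t
      constructor
      · rintro ⟨⟨_, h2⟩, h3⟩; exact ⟨h3, h2⟩
      · rintro ⟨h3, h2⟩; exact ⟨⟨hs.1.trans h3, h2⟩, h3⟩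
    calc (∫ t, H s t ∂μ) = ∫ t in Ioc 0 x, (Ioi s).indicator (fun t => f s * g t) t := by
          simp_rw [h1]; rfl
      _ = ∫ t in Ioc 0 x ∩ Ioi s, f s * g t := setIntegral_indicator measurableSet_Ioi
      _ = ∫ t in Ioc s x, f s * g t := by rw [hset]
      _ = f s * ∫ t in Ioc s x, g t := integral_const_mul _ _
  have R : (∫ t, ∫ s, H s t ∂μ ∂μ) = ∫ t in Ioc 0 x, (∫ s in Ioc 0 t, f s) * g t := by
    apply setIntegral_congr_fun measurableSet_Ioc
    intro t ht
    have h1 : ∀ s, H s t = (Iio t).indicator (fun s => f s * g t) s := by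
      intro s; by_cases h : s < t <;> simp [hH, h, Set.indicator_apply]
    have hset : Ioc 0 x ∩ Iio t = Ioo 0 t := by
      ext s
      constructor
      · rintro ⟨⟨h2, _⟩, h3⟩; exact ⟨h2, h3⟩
      · rintro ⟨h2, h3⟩; exact ⟨⟨h2, h3.le.trans ht.2⟩, h3⟩
    calc (∫ s, H s t ∂μ) = ∫ s in Ioc 0 x, (Iio t).indicator (fun s => f s * g t) s := by
          simp_rw [h1]; rfl
      _ = ∫ s in Ioc 0 x ∩ Iio t, f s * g t := setIntegral_indicator measurableSet_Iio
      _ = ∫ s in Ioo 0 t, f s * g t := by rw [hset]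
      _ = ∫ s in Ioc 0 t, f s * g t := (integral_Ioc_eq_integral_Ioo).symm
      _ = (∫ s in Ioc 0 t, f s) * g t := integral_mul_const _ _
  rw [← L, ← R, swap]

/-- Key identity: product of primitives. -/
lemma primitive_mul {x : ℝ} {f g : ℝ → ℝ}
    (hf : IntegrableOn f (Icc 0 x)) (hg : IntegrableOn g (Icc 0 x)) :
    (∫ s in Ioc 0 x, f s) * (∫ t in Ioc 0 x, g t) =
      ∫ s in Ioc 0 x, (f s * (∫ t in Ioc 0 s, g t) + (∫ t in Ioc 0 s, f t) * g s) := by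
  have hf' : IntegrableOn f (Ioc 0 x) := hf.mono_set Ioc_subset_Icc_self
  have hg' : IntegrableOn g (Ioc 0 x) := hg.mono_set Ioc_subset_Icc_self
  have hGc : ContinuousOn (fun s => ∫ t in Ioc 0 s, g t) (Icc 0 x) :=
    intervalIntegral.continuousOn_primitive hg
  have hFc : ContinuousOn (fun s => ∫ t in Ioc 0 s, f t) (Icc 0 x) :=
    intervalIntegral.continuousOn_primitive hf
  have hfG : IntegrableOn (fun s => f s * ∫ t in Ioc 0 s, g t) (Icc 0 x) :=
    hf.mul_continuousOn hGc isCompact_Icc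
  have hFg : IntegrableOn (fun s => (∫ t in Ioc 0 s, f t) * g s) (Icc 0 x) :=
    hg.continuousOn_mul hFc isCompact_Icc
  have key : ∀ s ∈ Ioc (0:ℝ) x, (∫ t in Ioc 0 s, g t) + (∫ t in Ioc s x, g t)
      = ∫ t in Ioc 0 x, g t := by
    intro s hs
    have h1 : IntegrableOn g (Ioc 0 s) :=
      hg.mono_set (Ioc_subset_Icc_self.trans (Icc_subset_Icc le_rfl hs.2))
    have h2 : IntegrableOn g (Ioc s x) :=
      hg.mono_set (fun t ht => ⟨(hs.1.trans ht.1).le, ht.2⟩)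
    have hu := setIntegral_union (μ := volume) (f := g)
      (Set.Ioc_disjoint_Ioc_of_le (a := 0) (d := x) (le_refl s)) measurableSet_Ioc h1 h2
    rw [Set.Ioc_union_Ioc_eq_Ioc hs.1.le hs.2] at hu
    exact hu.symm
  have htail : IntegrableOn (fun s => f s * (∫ t in Ioc s x, g t)) (Ioc 0 x) := by
    have hc : IntegrableOn (fun s => f s * (∫ t in Ioc 0 x, g t)) (Ioc 0 x) := hf'.mul_const _
    have h1 : IntegrableOn
        (fun s => f s * (∫ t in Ioc 0 x, g t) - f s * ∫ t in Ioc 0 s, g t) (Ioc 0 x) :=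
      hc.sub (hfG.mono_set Ioc_subset_Icc_self)
    apply h1.congr_fun _ measurableSet_Ioc
    intro s hs
    dsimp only
    rw [← key s hs]
    ring
  calc (∫ s in Ioc 0 x, f s) * (∫ t in Ioc 0 x, g t)
      = ∫ s in Ioc 0 x, f s * (∫ t in Ioc 0 x, g t) := (integral_mul_const _ _).symm
    _ = ∫ s in Ioc 0 x, ((f s * ∫ t in Ioc 0 s, g t) + f s * (∫ t in Ioc s x, g t)) := by
        apply setIntegral_congr_fun measurableSet_Ioc
        intro s hs
        dsimp only
        rw [← key s hs]
        ring
    _ = (∫ s in Ioc 0 x, f s * ∫ t in Ioc 0 s, g t)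
        + ∫ s in Ioc 0 x, f s * (∫ t in Ioc s x, g t) :=
        integral_add (hfG.mono_set Ioc_subset_Icc_self) htail
    _ = (∫ s in Ioc 0 x, f s * ∫ t in Ioc 0 s, g t)
        + ∫ s in Ioc 0 x, (∫ t in Ioc 0 s, f t) * g s := by
        rw [fubini_swap hf' hg']
    _ = ∫ s in Ioc 0 x, ((f s * ∫ t in Ioc 0 s, g t) + (∫ t in Ioc 0 s, f t) * g s) :=
        (integral_add (hfG.mono_set Ioc_subset_Icc_self)
          (hFg.mono_set Ioc_subset_Icc_self)).symm

/-- Product rule for absolutely continuous functions on `[0, π]`. -/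
lemma prod_rule {f g F G : ℝ → ℝ} {x : ℝ} (hx : x ∈ Icc 0 Real.pi)
    (hf : IntegrableOn f (Icc 0 Real.pi)) (hg : IntegrableOn g (Icc 0 Real.pi))
    (hF : ∀ s ∈ Icc (0:ℝ) Real.pi, F s = F 0 + ∫ t in Ioc 0 s, f t)
    (hG : ∀ s ∈ Icc (0:ℝ) Real.pi, G s = G 0 + ∫ t in Ioc 0 s, g t) :
    F x * G x = F 0 * G 0 + ∫ s in Ioc 0 x, (f s * G s + F s * g s) := by
  have hsub : Icc (0:ℝ) x ⊆ Icc 0 Real.pi := Icc_subset_Icc le_rfl hx.2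
  have hfx : IntegrableOn f (Icc 0 x) := hf.mono_set hsub
  have hgx : IntegrableOn g (Icc 0 x) := hg.mono_set hsub
  have hkey := primitive_mul hfx hgx
  have hGc : ContinuousOn (fun s => ∫ t in Ioc 0 s, g t) (Icc 0 x) :=
    intervalIntegral.continuousOn_primitive hgx
  have hFc : ContinuousOn (fun s => ∫ t in Ioc 0 s, f t) (Icc 0 x) :=
    intervalIntegral.continuousOn_primitive hfx
  have hA2 : IntegrableOn
      (fun s => (f s * ∫ t in Ioc 0 s, g t) + (∫ t in Ioc 0 s, f t) * g s) (Ioc 0 x) :=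
    IntegrableOn.mono_set
      ((hfx.mul_continuousOn hGc isCompact_Icc).add (hgx.continuousOn_mul hFc isCompact_Icc))
      Ioc_subset_Icc_self
  have hA1 : IntegrableOn (fun s => f s * G 0 + F 0 * g s) (Ioc 0 x) :=
    IntegrableOn.mono_set ((hfx.mul_const _).add (hgx.const_mul _)) Ioc_subset_Icc_self
  have step : (∫ s in Ioc 0 x, (f s * G s + F s * g s)) =
      (∫ s in Ioc 0 x, (f s * G 0 + F 0 * g s)) +
        ∫ s in Ioc 0 x, ((f s * ∫ t in Ioc 0 s, g t) + (∫ t in Ioc 0 s, f t) * g s) := by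
    rw [← integral_add hA1 hA2]
    apply setIntegral_congr_fun measurableSet_Ioc
    intro s hs
    have hs' : s ∈ Icc (0:ℝ) Real.pi := hsub ⟨hs.1.le, hs.2⟩
    dsimp only
    rw [hF s hs', hG s hs']
    ring
  have h1 : (∫ s in Ioc 0 x, (f s * G 0 + F 0 * g s)) =
      (∫ t in Ioc 0 x, f t) * G 0 + F 0 * ∫ t in Ioc 0 x, g t := by
    rw [integral_add (IntegrableOn.mono_set (hfx.mul_const _) Ioc_subset_Icc_self)
      (IntegrableOn.mono_set (hgx.const_mul _) Ioc_subset_Icc_self),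
      integral_mul_const, integral_const_mul]
  rw [step, h1, ← hkey, hF x hx, hG x hx]
  ring

/-- Continuity of a function with an integral representation. -/
lemma cont_of_prim {g G : ℝ → ℝ} (hg : IntegrableOn g (Icc 0 Real.pi))
    (hG : ∀ s ∈ Icc (0:ℝ) Real.pi, G s = G 0 + ∫ t in Ioc 0 s, g t) :
    ContinuousOn G (Icc 0 Real.pi) := by
  apply ContinuousOn.congr
    (continuousOn_const.add (intervalIntegral.continuousOn_primitive hg))
  intro s hs
  exact hG s hs

/-- Integrability of the product-rule integrand. -/
lemma intOn_pair {f g F G : ℝ → ℝ}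
    (hf : IntegrableOn f (Icc 0 Real.pi)) (hg : IntegrableOn g (Icc 0 Real.pi))
    (hF : ∀ s ∈ Icc (0:ℝ) Real.pi, F s = F 0 + ∫ t in Ioc 0 s, f t)
    (hG : ∀ s ∈ Icc (0:ℝ) Real.pi, G s = G 0 + ∫ t in Ioc 0 s, g t) :
    IntegrableOn (fun s => f s * G s + F s * g s) (Icc 0 Real.pi) :=
  (hf.mul_continuousOn (cont_of_prim hg hG) isCompact_Icc).add
    (hg.continuousOn_mul (cont_of_prim hf hF) isCompact_Icc)

/-- Componentwise form of a solution of the Dirac system with `p ≡ 0`. -/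
lemma sol_comp {q : ℝ → ℝ} {lam : ℝ} {y : ℝ → Fin 2 → ℝ}
    (h : IsSol (fun _ => 0) q lam y) :
    ∃ d0 d1 : ℝ → ℝ,
      IntegrableOn d0 (Icc 0 Real.pi) ∧ IntegrableOn d1 (Icc 0 Real.pi) ∧
      (∀ x ∈ Icc (0:ℝ) Real.pi, y x 0 = y 0 0 + ∫ s in Ioc 0 x, d0 s) ∧
      (∀ x ∈ Icc (0:ℝ) Real.pi, y x 1 = y 0 1 + ∫ s in Ioc 0 x, d1 s) ∧
      (∀ᵐ x ∂(volume.restrict (Ioc 0 Real.pi)),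
        d0 x = q x * y x 0 - lam * y x 1 ∧ d1 x = lam * y x 0 - q x * y x 1) := by
  obtain ⟨y', hint, hprim, hae⟩ := h
  refine ⟨fun s => y' s 0, fun s => y' s 1, ?_, ?_, ?_, ?_, ?_⟩
  · exact (ContinuousLinearMap.proj (R := ℝ) (φ := fun _ : Fin 2 => ℝ) 0).integrable_comp hint
  · exact (ContinuousLinearMap.proj (R := ℝ) (φ := fun _ : Fin 2 => ℝ) 1).integrable_comp hint
  · intro x hx
    have hc := congrFun (hprim x hx) 0
    rw [hc, Pi.add_apply, intervalIntegral.integral_of_le hx.1,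
      proj_integral (hint.mono_set (fun s hs => ⟨hs.1.le, hs.2.trans hx.2⟩)) 0]
  · intro x hx
    have hc := congrFun (hprim x hx) 1
    rw [hc, Pi.add_apply, intervalIntegral.integral_of_le hx.1,
      proj_integral (hint.mono_set (fun s hs => ⟨hs.1.le, hs.2.trans hx.2⟩)) 1]
  · filter_upwards [hae] with x hx
    have h0 := congrFun hx 0
    have h1 := congrFun hx 1
    simp [BmatR, OmegaR, Matrix.mulVec, dotProduct, Fin.sum_univ_two] at h0 h1
    constructor <;> linarith

/-- The Wronskian of two solutions of the same equation is constant. -/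
lemma wronskian_const {q : ℝ → ℝ} {lam : ℝ} {y z : ℝ → Fin 2 → ℝ}
    (hy : IsSol (fun _ => 0) q lam y) (hz : IsSol (fun _ => 0) q lam z) :
    ∀ x ∈ Icc (0:ℝ) Real.pi,
      y x 0 * z x 1 - y x 1 * z x 0 = y 0 0 * z 0 1 - y 0 1 * z 0 0 := by
  obtain ⟨d0, d1, hd0, hd1, hy0, hy1, hdae⟩ := sol_comp hy
  obtain ⟨e0, e1, he0, he1, hz0, hz1, heae⟩ := sol_comp hz
  intro x hx
  have P1 := prod_rule (F := fun s => y s 0) (G := fun s => z s 1) hx hd0 he1 hy0 hz1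
  have P2 := prod_rule (F := fun s => y s 1) (G := fun s => z s 0) hx hd1 he0 hy1 hz0
  have I1 : IntegrableOn (fun s => d0 s * z s 1 + y s 0 * e1 s) (Icc 0 Real.pi) :=
    intOn_pair hd0 he1 hy0 hz1
  have I2 : IntegrableOn (fun s => d1 s * z s 0 + y s 1 * e0 s) (Icc 0 Real.pi) :=
    intOn_pair hd1 he0 hy1 hz0
  have hzero : (∫ s in Ioc 0 x, (d0 s * z s 1 + y s 0 * e1 s))
      - (∫ s in Ioc 0 x, (d1 s * z s 0 + y s 1 * e0 s)) = 0 := by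
    rw [← integral_sub
      (I1.mono_set (Ioc_subset_Icc_self.trans (Icc_subset_Icc le_rfl hx.2)))
      (I2.mono_set (Ioc_subset_Icc_self.trans (Icc_subset_Icc le_rfl hx.2)))]
    have hsub : Ioc (0:ℝ) x ⊆ Ioc 0 Real.pi := Ioc_subset_Ioc le_rfl hx.2
    have hae0 : (fun s => (d0 s * z s 1 + y s 0 * e1 s) - (d1 s * z s 0 + y s 1 * e0 s))
        =ᵐ[volume.restrict (Ioc 0 x)] (fun _ => (0:ℝ)) := by
      filter_upwards [ae_restrict_of_ae_restrict_of_subset hsub hdae,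
        ae_restrict_of_ae_restrict_of_subset hsub heae] with s hs1 hs2
      rw [hs1.1, hs1.2, hs2.1, hs2.2]
      ring
    rw [integral_congr_ae hae0]
    simp
  linarith

/-- Sum of two solutions is a solution. -/
lemma IsSol.add' {q : ℝ → ℝ} {lam : ℝ} {y z : ℝ → Fin 2 → ℝ}
    (hy : IsSol (fun _ => 0) q lam y) (hz : IsSol (fun _ => 0) q lam z) :
    IsSol (fun _ => 0) q lam (fun x => y x + z x) := by
  obtain ⟨y', hyint, hyprim, hyae⟩ := hy
  obtain ⟨z', hzint, hzprim, hzae⟩ := hz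
  refine ⟨fun s => y' s + z' s, hyint.add hzint, ?_, ?_⟩
  · intro x hx
    have hyi : IntervalIntegrable y' volume 0 x :=
      (intervalIntegrable_iff_integrableOn_Ioc_of_le hx.1).2
        (hyint.mono_set (fun s hs => ⟨hs.1.le, hs.2.trans hx.2⟩))
    have hzi : IntervalIntegrable z' volume 0 x :=
      (intervalIntegrable_iff_integrableOn_Ioc_of_le hx.1).2
        (hzint.mono_set (fun s hs => ⟨hs.1.le, hs.2.trans hx.2⟩))
    rw [intervalIntegral.integral_add hyi hzi]
    dsimp only
    rw [hyprim x hx, hzprim x hx]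
    abel
  · filter_upwards [hyae, hzae] with s e1 e2
    show BmatR.mulVec (y' s + z' s) + (OmegaR _ q s).mulVec (y s + z s) = lam • (y s + z s)
    rw [Matrix.mulVec_add, Matrix.mulVec_add, smul_add, ← e1, ← e2]
    abel

/-- The flip transform: if `y` solves with `λ`, then `(y₁, -y₂)` solves with `-λ`. -/
lemma IsSol.flip' {q : ℝ → ℝ} {lam : ℝ} {y : ℝ → Fin 2 → ℝ}
    (hy : IsSol (fun _ => 0) q lam y) :
    IsSol (fun _ => 0) q (-lam) (fun x => ![y x 0, -(y x 1)]) := by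
  obtain ⟨y', hint, hprim, hae⟩ := hy
  have hint0 : IntegrableOn (fun s => y' s 0) (Icc 0 Real.pi) :=
    (ContinuousLinearMap.proj (R := ℝ) (φ := fun _ : Fin 2 => ℝ) 0).integrable_comp hint
  have hint1 : IntegrableOn (fun s => y' s 1) (Icc 0 Real.pi) :=
    (ContinuousLinearMap.proj (R := ℝ) (φ := fun _ : Fin 2 => ℝ) 1).integrable_comp hint
  refine ⟨fun s => ![y' s 0, -(y' s 1)], ?_, ?_, ?_⟩
  · have he : (fun s => (![y' s 0, -(y' s 1)] : Fin 2 → ℝ)) =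
        fun s => (y' s 0) • (![1, 0] : Fin 2 → ℝ) + (-(y' s 1)) • ![0, 1] := by
      funext s i
      fin_cases i <;> simp
    rw [IntegrableOn, he]
    exact (hint0.smul_const _).add (hint1.neg.smul_const _)
  · intro x hx
    have hflipint : IntegrableOn (fun s => (![y' s 0, -(y' s 1)] : Fin 2 → ℝ)) (Ioc 0 x) := by
      have he : (fun s => (![y' s 0, -(y' s 1)] : Fin 2 → ℝ)) =
          fun s => (y' s 0) • (![1, 0] : Fin 2 → ℝ) + (-(y' s 1)) • ![0, 1] := by
        funext s i
        fin_cases i <;> simp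
      rw [he]
      have hm : Ioc (0:ℝ) x ⊆ Icc 0 Real.pi := fun s hs => ⟨hs.1.le, hs.2.trans hx.2⟩
      exact (((hint0.mono_set hm).smul_const _)).add (((hint1.mono_set hm).neg.smul_const _))
    have hIoc : Ioc (0:ℝ) x ⊆ Icc 0 Real.pi := fun s hs => ⟨hs.1.le, hs.2.trans hx.2⟩
    have h0 := congrFun (hprim x hx) 0
    have h1 := congrFun (hprim x hx) 1
    rw [Pi.add_apply, intervalIntegral.integral_of_le hx.1,
      proj_integral (hint.mono_set hIoc) 0] at h0
    rw [Pi.add_apply, intervalIntegral.integral_of_le hx.1,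
      proj_integral (hint.mono_set hIoc) 1] at h1
    have hvec : (∫ s in Ioc 0 x, (![y' s 0, -(y' s 1)] : Fin 2 → ℝ)) =
        ![∫ s in Ioc 0 x, y' s 0, -(∫ s in Ioc 0 x, y' s 1)] := by
      funext i
      rw [proj_integral hflipint i]
      fin_cases i <;> simp [integral_neg]
    show (![y x 0, -(y x 1)] : Fin 2 → ℝ) =
      ![y 0 0, -(y 0 1)] + ∫ s in (0:ℝ)..x, ![y' s 0, -(y' s 1)]
    rw [intervalIntegral.integral_of_le hx.1, hvec]
    funext i
    fin_cases i <;> simp <;> linarith [h0, h1]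
  · filter_upwards [hae] with s e
    have h0 := congrFun e 0
    have h1 := congrFun e 1
    simp [BmatR, OmegaR, Matrix.mulVec, dotProduct, Fin.sum_univ_two] at h0 h1
    funext i
    fin_cases i <;>
      simp [BmatR, OmegaR, Matrix.mulVec, dotProduct, Fin.sum_univ_two] <;> linarith

/-- Uniqueness: a solution vanishing at `0` vanishes identically, given a fundamental
pair of solutions. -/
lemma unique_zero {q : ℝ → ℝ} {lam : ℝ} {u p ψ : ℝ → Fin 2 → ℝ}
    (hu : IsSol (fun _ => 0) q lam u) (hu0 : u 0 = 0)
    (hp : IsSol (fun _ => 0) q lam p) (hψ : IsSol (fun _ => 0) q lam ψ)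
    (hW : p 0 0 * ψ 0 1 - p 0 1 * ψ 0 0 = 1) :
    ∀ x ∈ Icc (0:ℝ) Real.pi, u x = 0 := by
  intro x hx
  have W1 := wronskian_const hu hp x hx
  have W2 := wronskian_const hu hψ x hx
  have W3 := wronskian_const hp hψ x hx
  rw [hW] at W3
  have hz0 : u 0 0 = 0 := by rw [hu0]; rfl
  have hz1 : u 0 1 = 0 := by rw [hu0]; rfl
  rw [hz0, hz1] at W1 W2
  simp only [zero_mul, sub_zero, sub_self] at W1 W2
  funext i
  fin_cases i
  · show u x 0 = 0
    have ha : u x 0 * (p x 0 * ψ x 1 - p x 1 * ψ x 0) = 0 := by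
      linear_combination p x 0 * W2 - ψ x 0 * W1
    rw [W3] at ha
    linarith
  · show u x 1 = 0
    have hb : u x 1 * (p x 0 * ψ x 1 - p x 1 * ψ x 0) = 0 := by
      linear_combination (-ψ x 1) * W1 + p x 1 * W2
    rw [W3] at hb
    linarith

end Stmt18

/-- Spectrum mapping: `λ ∈ Spec(0,q,α,β)` implies `-λ ∈ Spec(0,q,-α,-β)`. -/
lemma Stmt18.spec_map {q : ℝ → ℝ} {α β lam : ℝ}
    (h : lam ∈ Spec (fun _ => 0) q α β) :
    -lam ∈ Spec (fun _ => 0) q (-α) (-β) := by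
  obtain ⟨y, hy, ⟨x0, hx0, hx0ne⟩, hb0, hbπ⟩ := h
  refine ⟨fun x => ![y x 0, -(y x 1)], Stmt18.IsSol.flip' hy, ⟨x0, hx0, ?_⟩, ?_, ?_⟩
  · intro hcon
    apply hx0ne
    have h0 := congrFun hcon 0
    have h1 := congrFun hcon 1
    simp at h0 h1
    funext i
    fin_cases i <;> simpa
  · simp only [Real.cos_neg, Real.sin_neg]
    simp
    linarith [hb0]
  · simp only [Real.cos_neg, Real.sin_neg]
    simp
    linarith [hbπ]

/-- Symmetry of the spectrum for `p ≡ 0`: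
`λ ∈ Spec(0,q,α,β) ↔ -λ ∈ Spec(0,q,-α,-β)`, i.e.
`Spec(0,q,-α,-β) = -Spec(0,q,α,β)`, and the corresponding norming constants agree:
`∫₀^π |φ(x,λ,α)|² = ∫₀^π |φ(x,-λ,-α)|²`. -/
theorem stmt_18 (q : ℝ → ℝ) (hq : IntegrableOn q (Icc 0 Real.pi)) (α β : ℝ)
    (φ : ℝ → ℝ → ℝ → Fin 2 → ℝ)
    (hφ : ∀ γ l : ℝ, IsSolInit (fun _ => 0) q l γ (φ γ l)) :
    (∀ lam : ℝ, lam ∈ Spec (fun _ => 0) q α β ↔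
      -lam ∈ Spec (fun _ => 0) q (-α) (-β)) ∧
    Spec (fun _ => 0) q (-α) (-β) = (fun l : ℝ => -l) '' Spec (fun _ => 0) q α β ∧
    (∀ lam ∈ Spec (fun _ => 0) q α β,
      (∫ x in (0:ℝ)..Real.pi, ((φ α lam x 0) ^ 2 + (φ α lam x 1) ^ 2)) =
        ∫ x in (0:ℝ)..Real.pi, ((φ (-α) (-lam) x 0) ^ 2 + (φ (-α) (-lam) x 1) ^ 2)) := by
  have hiff : ∀ α' β' lam : ℝ, lam ∈ Spec (fun _ => 0) q α' β' ↔
      -lam ∈ Spec (fun _ => 0) q (-α') (-β') := by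
    intro α' β' lam
    constructor
    · exact Stmt18.spec_map
    · intro h
      have := Stmt18.spec_map h
      simpa using this
  refine ⟨hiff α β, ?_, ?_⟩
  · ext l
    simp only [Set.mem_image]
    constructor
    · intro h
      exact ⟨-l, (hiff α β (-l)).mpr (by simpa using h), by simp⟩
    · rintro ⟨a, ha, rfl⟩
      exact (hiff α β a).mp ha
  · intro lam _
    obtain ⟨hy, hy0⟩ := hφ α lam
    obtain ⟨hw, hw0⟩ := hφ (-α) (-lam)
    obtain ⟨hψ, hψ0⟩ := hφ (-α + Real.pi / 2) (-lam)
    have hz : IsSol (fun _ => 0) q (-lam)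
        (fun x => ![φ α lam x 0, -(φ α lam x 1)]) := Stmt18.IsSol.flip' hy
    have hu : IsSol (fun _ => 0) q (-lam)
        (fun x => φ (-α) (-lam) x + ![φ α lam x 0, -(φ α lam x 1)]) := Stmt18.IsSol.add' hw hz
    have hu0 : (fun x => φ (-α) (-lam) x + ![φ α lam x 0, -(φ α lam x 1)]) 0 = 0 := by
      funext i
      fin_cases i <;> simp [hw0, hy0, Real.sin_neg, Real.cos_neg]
    have hW : φ (-α) (-lam) 0 0 * φ (-α + Real.pi / 2) (-lam) 0 1
        - φ (-α) (-lam) 0 1 * φ (-α + Real.pi / 2) (-lam) 0 0 = 1 := by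
      rw [hw0, hψ0]
      simp [Real.sin_add_pi_div_two, Real.cos_add_pi_div_two]
      linear_combination Real.sin_sq_add_cos_sq α
    have huz := Stmt18.unique_zero hu hu0 hw hψ hW
    apply intervalIntegral.integral_congr
    intro x hx
    have hx' : x ∈ Icc (0:ℝ) Real.pi := by
      rwa [Set.uIcc_of_le Real.pi_pos.le] at hx
    have hzero := huz x hx'
    have e0 := congrFun hzero 0
    have e1 := congrFun hzero 1
    simp at e0 e1
    have f0 : φ (-α) (-lam) x 0 = -(φ α lam x 0) := by linarith
    have f1 : φ (-α) (-lam) x 1 = φ α lam x 1 := by linarith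
    dsimp only
    rw [f0, f1]
    ring
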